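/- Let M : ℝ^k → Matrix (Fin n) (Fin m) ℝ be a matrix-valued function each of whose entries is real-analytic, and let r be the maximum of rank(M(x)) over all x ∈ ℝ^k, attained at some point. Then the set {x ∈ ℝ^k : rank(M(x)) < r} has Lebesgue measure zero; in particular rank(M(x)) = r for almost all x. -/

import Mathlib

open MeasureTheory

section Aux
open Set Topology Filter Module Submodule Matrix

private lemma aux_cons_analytic_fst {k : ℕ} (y : Fin k → ℝ) :
    AnalyticOnNhd ℝ (fun s : ℝ => (Fin.cons s y : Fin (k+1) → ℝ)) univ := by
  apply AnalyticOnNhd.pi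
  intro i
  refine Fin.cases ?_ ?_ i
  · simpa using analyticOnNhd_id (𝕜 := ℝ) (s := (univ : Set ℝ))
  · intro j; simpa using analyticOnNhd_const (v := y j) (s := (univ : Set ℝ))

private lemma aux_cons_analytic_snd {k : ℕ} (t : ℝ) :
    AnalyticOnNhd ℝ (fun z : Fin k → ℝ => (Fin.cons t z : Fin (k+1) → ℝ)) univ := by
  apply AnalyticOnNhd.pi
  intro i
  refine Fin.cases ?_ ?_ i
  · simpa using analyticOnNhd_const (v := t) (s := (univ : Set (Fin k → ℝ)))
  · intro j
    have hj : AnalyticOnNhd ℝ (fun x : Fin k → ℝ => x j) univ :=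
      (ContinuousLinearMap.proj (R := ℝ) (φ := fun _ : Fin k => ℝ) j).analyticOnNhd univ
    simpa using hj

private lemma aux_analytic_zero_null_1d (f : ℝ → ℝ) (hf : AnalyticOnNhd ℝ f univ)
    (hne : ∃ t, f t ≠ 0) : volume {t : ℝ | f t = 0} = 0 := by
  obtain ⟨t₀, ht₀⟩ := hne
  have hnotall : ¬ EqOn f 0 univ := fun h => ht₀ (h (mem_univ t₀))
  have hiso : ∀ z : ℝ, ∀ᶠ t in 𝓝[≠] z, f t ≠ 0 := by
    intro z
    rcases (hf z (mem_univ z)).eventually_eq_zero_or_eventually_ne_zero with h | h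
    · exact absurd (hf.eqOn_zero_of_preconnected_of_frequently_eq_zero
        isPreconnected_univ (mem_univ z)
        ((h.filter_mono nhdsWithin_le_nhds).frequently)) hnotall
    · exact h
  set Z := {t : ℝ | f t = 0} with hZ
  have : DiscreteTopology Z := by
    rw [discreteTopology_subtype_iff]
    intro x _
    have h2 : ∀ᶠ t in 𝓝[≠] x ⊓ 𝓟 Z, f t ≠ 0 := (hiso x).filter_mono inf_le_left
    have h3 : ∀ᶠ t in 𝓝[≠] x ⊓ 𝓟 Z, f t = 0 :=
      Filter.eventually_inf_principal.mpr (Filter.Eventually.of_forall fun a ha => ha)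
    have : ∀ᶠ _ in 𝓝[≠] x ⊓ 𝓟 Z, False := by filter_upwards [h2, h3] with a ha hb; exact ha hb
    exact Filter.eventually_false_iff_eq_bot.mp this
  have hc : Z.Countable := by
    rw [← Set.countable_coe_iff]
    exact countable_of_Lindelof_of_discrete
  exact hc.measure_zero _

private lemma aux_analytic_zero_null : ∀ (k : ℕ) (f : (Fin k → ℝ) → ℝ),
    AnalyticOnNhd ℝ f univ → (∃ x, f x ≠ 0) → volume {x | f x = 0} = 0 := by
  intro k
  induction k with
  | zero =>
    intro f _ ⟨x₀, hx₀⟩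
    have : {x : Fin 0 → ℝ | f x = 0} = ∅ := by
      ext x
      simp only [mem_setOf_eq, mem_empty_iff_false, iff_false]
      rwa [Subsingleton.elim x x₀]
    simp [this]
  | succ k ih =>
    intro f hf ⟨x₀, hx₀⟩
    have hcont : Continuous f := by
      rw [← continuousOn_univ]; exact hf.continuousOn
    have hZm : MeasurableSet {x : Fin (k+1) → ℝ | f x = 0} :=
      (isClosed_eq hcont continuous_const).measurableSet
    set e := MeasurableEquiv.piFinSuccAbove (fun _ : Fin (k+1) => ℝ) 0 with he
    have hsymm : ∀ p : ℝ × (Fin k → ℝ), e.symm p = Fin.cons p.1 p.2 := by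
      intro p
      simp [he, MeasurableEquiv.piFinSuccAbove, Fin.insertNthEquiv, Fin.insertNth_zero']
    have mp := (volume_preserving_piFinSuccAbove (fun _ : Fin (k+1) => ℝ) 0).symm e
    have key : volume (e.symm ⁻¹' {x | f x = 0}) = volume {x : Fin (k+1) → ℝ | f x = 0} :=
      mp.measure_preimage hZm.nullMeasurableSet
    rw [← key]
    have hpre : e.symm ⁻¹' {x | f x = 0} = {p : ℝ × (Fin k → ℝ) | f (Fin.cons p.1 p.2) = 0} := by
      ext p; simp [hsymm p]
    rw [hpre, Measure.volume_eq_prod, Measure.measure_prod_null]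
    · have hB : ∀ᵐ t : ℝ ∂volume, f (Fin.cons t (Fin.tail x₀)) ≠ 0 := by
        rw [ae_iff]
        simpa using aux_analytic_zero_null_1d _
          (hf.comp (aux_cons_analytic_fst (Fin.tail x₀)) (mapsTo_univ _ _))
          ⟨x₀ 0, by simpa [Function.comp, Fin.cons_self_tail] using hx₀⟩
      filter_upwards [hB] with t ht
      have : Prod.mk t ⁻¹' {p : ℝ × (Fin k → ℝ) | f (Fin.cons p.1 p.2) = 0}
          = {y : Fin k → ℝ | f (Fin.cons t y) = 0} := rfl
      show volume (Prod.mk t ⁻¹' {p : ℝ × (Fin k → ℝ) | f (Fin.cons p.1 p.2) = 0}) = 0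
      rw [this]
      exact ih _ (hf.comp (aux_cons_analytic_snd t) (mapsTo_univ _ _)) ⟨Fin.tail x₀, ht⟩
    · refine (isClosed_eq (hcont.comp ?_) continuous_const).measurableSet
      exact continuous_pi fun i => Fin.cases continuous_fst
        (fun j => (continuous_apply j).comp continuous_snd) i

private lemma aux_exists_linearIndependent_comp {V : Type*} [AddCommGroup V] [Module ℝ V]
    [FiniteDimensional ℝ V] {ι : Type*} (v : ι → V) (r : ℕ)
    (hr : finrank ℝ (span ℝ (Set.range v)) = r) :
    ∃ h : Fin r → ι, LinearIndependent ℝ (v ∘ h) := by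
  obtain ⟨b, hb₁, hb₂, hb₃⟩ := exists_linearIndependent ℝ (Set.range v)
  have hfin : b.Finite := hb₃.setFinite
  haveI : Fintype b := hfin.fintype
  have hcard : Fintype.card b = r := by
    rw [← hr, ← hb₂, finrank_span_set_eq_card hb₃, Set.toFinset_card]
  let e : Fin r ≃ b := (Fintype.equivFinOfCardEq hcard).symm
  have hsel : ∀ j : Fin r, ∃ i, v i = (e j : V) := fun j => hb₁ (e j).2
  choose h hh using hsel
  refine ⟨h, ?_⟩
  have : v ∘ h = fun j => ((e j : V)) := funext fun j => hh j
  rw [this]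
  exact hb₃.comp e e.injective

private lemma aux_exists_submatrix_det_ne_zero {n m r : ℕ} (A : Matrix (Fin n) (Fin m) ℝ)
    (hr : A.rank = r) :
    ∃ (f : Fin r → Fin n) (g : Fin r → Fin m), (A.submatrix f g).det ≠ 0 := by
  obtain ⟨g, hg⟩ := aux_exists_linearIndependent_comp (fun j => Aᵀ j) r
    (by have := Matrix.rank_eq_finrank_span_cols A; rw [hr] at this; exact this.symm)
  set B : Matrix (Fin n) (Fin r) ℝ := A.submatrix id g with hB
  have hBT : Bᵀ = (fun j => Aᵀ j) ∘ g := by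
    ext j i; simp [hB, Matrix.transpose, Matrix.submatrix]
  have hBrank : B.rank = r := by
    rw [← Matrix.rank_transpose]
    have : LinearIndependent ℝ (fun i => Bᵀ i) := by rw [hBT]; exact hg
    have h := this.rank_matrix; rw [Fintype.card_fin] at h; exact h
  obtain ⟨f, hf⟩ := aux_exists_linearIndependent_comp (fun i => B i) r
    (by have := Matrix.rank_eq_finrank_span_row B; rw [hBrank] at this; exact this.symm)
  refine ⟨f, g, ?_⟩
  have hC : LinearIndependent ℝ (fun i => (A.submatrix f g) i) := by
    have : (fun i => (A.submatrix f g) i) = (fun i => B i) ∘ f := by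
      ext i j; simp [hB, Matrix.submatrix]
    rw [this]; exact hf
  have := Matrix.linearIndependent_rows_iff_isUnit.mp hC
  exact ((Matrix.isUnit_iff_isUnit_det _).mp this).ne_zero

private lemma aux_le_rank_of_submatrix_det_ne_zero {n m r : ℕ} (A : Matrix (Fin n) (Fin m) ℝ)
    (f : Fin r → Fin n) (g : Fin r → Fin m) (h : (A.submatrix f g).det ≠ 0) :
    r ≤ A.rank := by
  have hU : IsUnit (A.submatrix f g) := (Matrix.isUnit_iff_isUnit_det _).mpr h.isUnit
  have hcols : LinearIndependent ℝ (fun j => (A.submatrix f g)ᵀ j) :=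
    Matrix.linearIndependent_cols_iff_isUnit.mpr hU
  have hind : LinearIndependent ℝ (fun j : Fin r => Aᵀ (g j)) := by
    apply LinearIndependent.of_comp (LinearMap.funLeft ℝ ℝ f)
    have : (LinearMap.funLeft ℝ ℝ f) ∘ (fun j : Fin r => Aᵀ (g j))
        = fun j => (A.submatrix f g)ᵀ j := by
      ext j i; simp [LinearMap.funLeft, Matrix.submatrix, Matrix.transpose]
    rw [this]; exact hcols
  have h1 : finrank ℝ (span ℝ (Set.range (fun j : Fin r => Aᵀ (g j)))) = r := by
    rw [finrank_span_eq_card hind, Fintype.card_fin]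
  have h2 : span ℝ (Set.range (fun j : Fin r => Aᵀ (g j))) ≤ span ℝ (Set.range Aᵀ) :=
    span_mono (Set.range_comp_subset_range g Aᵀ)
  rw [Matrix.rank_eq_finrank_span_cols, ← h1]
  exact Submodule.finrank_mono h2

end Aux

/-- If every entry of `M : ℝ^k → Matrix (Fin n) (Fin m) ℝ` is real-analytic and the maximum
rank `r` of `M x` is attained, then `{x | rank (M x) < r}` has Lebesgue measure zero;
in particular `rank (M x) = r` for almost all `x`. -/
theorem analytic_matrix_rank_ae_max {k n m : ℕ} (M : (Fin k → ℝ) → Matrix (Fin n) (Fin m) ℝ)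
    (r : ℕ) (hM : ∀ i j, AnalyticOnNhd ℝ (fun x => M x i j) Set.univ)
    (hub : ∀ x, (M x).rank ≤ r) (hatt : ∃ x, (M x).rank = r) :
    volume {x : Fin k → ℝ | (M x).rank < r} = 0 ∧
    ∀ᵐ x : Fin k → ℝ ∂volume, (M x).rank = r := by
  obtain ⟨x₀, hx₀⟩ := hatt
  obtain ⟨f, g, hdet⟩ := aux_exists_submatrix_det_ne_zero (M x₀) hx₀
  set p : (Fin k → ℝ) → ℝ := fun x => ((M x).submatrix f g).det with hp
  have hpa : AnalyticOnNhd ℝ p Set.univ := by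
    have : p = fun x => ∑ σ : Equiv.Perm (Fin r),
        ((Equiv.Perm.sign σ : ℤ) : ℝ) * ∏ i, (M x).submatrix f g (σ i) i := by
      funext x; simp only [hp]; rw [Matrix.det_apply']
    rw [this]
    apply Finset.analyticOnNhd_fun_sum
    intro σ _
    exact (analyticOnNhd_const).mul
      (Finset.analyticOnNhd_fun_prod _ fun i _ => hM (f (σ i)) (g i))
  have hsub : {x : Fin k → ℝ | (M x).rank < r} ⊆ {x | p x = 0} := by
    intro x hx
    by_contra hpx
    exact absurd (aux_le_rank_of_submatrix_det_ne_zero (M x) f g hpx) (not_le.mpr hx)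
  have hnull : volume {x : Fin k → ℝ | (M x).rank < r} = 0 :=
    measure_mono_null hsub (aux_analytic_zero_null k p hpa ⟨x₀, hdet⟩)
  refine ⟨hnull, ?_⟩
  rw [ae_iff]
  refine measure_mono_null ?_ hnull
  intro x hx
  exact lt_of_le_of_ne (hub x) hx
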